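/- The series Σ_{n odd} n·a_n, taken over odd positive integers n, converges and equals 0; equivalently, Σ_{n odd} (4·tanh(nπ/2)/n^3 − π/n^2) = 0. -/

import Mathlib

/-- `a n = (4/n^4)·tanh(nπ/2) − π/n^3`. -/
noncomputable def a (n : ℕ) : ℝ :=
  4 / (n : ℝ) ^ 4 * Real.tanh ((n : ℝ) * Real.pi / 2) - Real.pi / (n : ℝ) ^ 3

open Real Filter Finset Topology


lemma sinh_prod (x : ℝ) :
    Tendsto (fun n : ℕ => π * x * ∏ j ∈ Finset.range n, (1 + x ^ 2 / ((j : ℝ) + 1) ^ 2))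
      atTop (𝓝 (Real.sinh (π * x))) := by
  have h := Complex.tendsto_euler_sin_prod (x * Complex.I)
  have h2 : Tendsto (fun n : ℕ => (-Complex.I) *
      ((Real.pi : ℂ) * (x * Complex.I) * ∏ j ∈ Finset.range n, (1 - (x * Complex.I) ^ 2 / ((j : ℂ) + 1) ^ 2)))
      atTop (𝓝 ((-Complex.I) * Complex.sin ((Real.pi : ℂ) * (x * Complex.I)))) :=
    h.const_mul _
  rw [show (Real.pi : ℂ) * (x * Complex.I) = ((Real.pi * x : ℝ) : ℂ) * Complex.I by push_cast; ring,
    Complex.sin_mul_I] at h2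
  have h3 : (-Complex.I) * (Complex.sinh ((Real.pi * x : ℝ) : ℂ) * Complex.I) = ((Real.sinh (π * x) : ℝ) : ℂ) := by
    rw [← Complex.ofReal_sinh]
    have : (-Complex.I) * Complex.I = 1 := by simp
    rw [mul_comm, mul_assoc, mul_comm Complex.I, this, mul_one]
  rw [h3] at h2
  rw [← Filter.tendsto_ofReal_iff]
  refine h2.congr fun n => ?_
  have hprod : ∏ j ∈ Finset.range n, ((1 : ℂ) - (x * Complex.I) ^ 2 / ((j : ℂ) + 1) ^ 2)
      = ((∏ j ∈ Finset.range n, ((1 : ℝ) + x ^ 2 / ((j : ℝ) + 1) ^ 2) : ℝ) : ℂ) := by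
    rw [Complex.ofReal_prod]
    refine Finset.prod_congr rfl fun j _ => ?_
    push_cast
    rw [mul_pow, Complex.I_sq]
    ring
  rw [hprod]
  push_cast
  linear_combination (-(π : ℂ) * (x : ℂ) *
    ∏ j ∈ Finset.range n, ((1 : ℂ) + (x : ℂ) ^ 2 / ((j : ℂ) + 1) ^ 2)) * Complex.I_sq

lemma prod_range_even_odd (f : ℕ → ℝ) (n : ℕ) :
    ∏ j ∈ Finset.range (2 * n), f j =
      (∏ j ∈ Finset.range n, f (2 * j)) * ∏ j ∈ Finset.range n, f (2 * j + 1) := by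
  induction n with
  | zero => simp
  | succ n ih =>
    rw [show 2 * (n + 1) = 2 * n + 1 + 1 by ring, Finset.prod_range_succ, Finset.prod_range_succ,
      Finset.prod_range_succ, Finset.prod_range_succ, ih]
    ring

lemma cosh_prod (x : ℝ) (hx : x ≠ 0) :
    Tendsto (fun n : ℕ => ∏ j ∈ Finset.range n, (1 + x ^ 2 / (2 * (j : ℝ) + 1) ^ 2))
      atTop (𝓝 (Real.cosh (π * x / 2))) := by
  have hA2 : Tendsto (fun n : ℕ => π * x * ∏ j ∈ Finset.range (2 * n), (1 + x ^ 2 / ((j : ℝ) + 1) ^ 2))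
      atTop (𝓝 (Real.sinh (π * x))) :=
    (sinh_prod x).comp (tendsto_id.const_mul_atTop' zero_lt_two)
  have hB := (sinh_prod (x / 2)).const_mul 2
  have hBne : Real.sinh (π * (x / 2)) ≠ 0 := fun h0 => by
    have h1 : π * (x / 2) = 0 := Real.sinh_injective (by rw [h0, Real.sinh_zero])
    rcases mul_eq_zero.1 h1 with h | h
    · exact Real.pi_ne_zero h
    · exact hx (by linarith)
  have h2ne : (2 : ℝ) * Real.sinh (π * (x / 2)) ≠ 0 := by positivity
  have hdiv := hA2.div hB h2ne
  have hπx : π * x ≠ 0 := mul_ne_zero Real.pi_ne_zero hx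
  have heq : ∀ n : ℕ,
      π * x * (∏ j ∈ Finset.range (2 * n), (1 + x ^ 2 / ((j : ℝ) + 1) ^ 2)) /
        (2 * (π * (x / 2) * ∏ j ∈ Finset.range n, (1 + (x / 2) ^ 2 / ((j : ℝ) + 1) ^ 2)))
      = ∏ j ∈ Finset.range n, (1 + x ^ 2 / (2 * (j : ℝ) + 1) ^ 2) := by
    intro n
    rw [prod_range_even_odd (fun j => 1 + x ^ 2 / ((j : ℝ) + 1) ^ 2) n]
    have hBpos : (0 : ℝ) < ∏ j ∈ Finset.range n, (1 + (x / 2) ^ 2 / ((j : ℝ) + 1) ^ 2) :=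
      Finset.prod_pos fun j _ => by positivity
    have hodd : ∀ j ∈ Finset.range n,
        (fun j : ℕ => 1 + x ^ 2 / ((j : ℝ) + 1) ^ 2) (2 * j + 1) = 1 + (x / 2) ^ 2 / ((j : ℝ) + 1) ^ 2 := by
      intro j _
      push_cast
      rw [div_pow]
      rw [show ((2 : ℝ) * j + 1 + 1) ^ 2 = 2 ^ 2 * ((j : ℝ) + 1) ^ 2 by ring, div_div]
    have heven : ∀ j ∈ Finset.range n,
        (fun j : ℕ => 1 + x ^ 2 / ((j : ℝ) + 1) ^ 2) (2 * j) = 1 + x ^ 2 / (2 * (j : ℝ) + 1) ^ 2 := by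
      intro j _; push_cast; ring_nf
    rw [Finset.prod_congr rfl hodd, Finset.prod_congr rfl heven]
    field_simp
  rw [show Real.cosh (π * x / 2) = Real.sinh (π * x) / (2 * Real.sinh (π * (x / 2))) by
    rw [show π * x = 2 * (π * (x / 2)) by ring, Real.sinh_two_mul]
    field_simp]
  exact hdiv.congr heq

lemma summable_odd_sq_inv : Summable (fun k : ℕ => 1 / (2 * (k : ℝ) + 1) ^ 2) := by
  have h0 : Summable (fun n : ℕ => 1 / (n : ℝ) ^ 2) := summable_one_div_nat_pow.mpr one_lt_two
  have h : Summable (fun k : ℕ => 1 / ((k : ℝ) + 1) ^ 2) := by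
    have := (summable_nat_add_iff (f := fun n : ℕ => 1 / (n : ℝ) ^ 2) 1).mpr h0
    simpa using this
  refine h.of_nonneg_of_le (fun k => by positivity) fun k => ?_
  have hk : (0:ℝ) ≤ (k:ℝ) := Nat.cast_nonneg k
  exact one_div_le_one_div_of_le (by positivity) (by nlinarith)

lemma summable_sq_inv (x : ℝ) : Summable (fun k : ℕ => x ^ 2 / (2 * (k : ℝ) + 1) ^ 2) := by
  simpa [div_eq_mul_inv, one_div] using summable_odd_sq_inv.mul_left (x ^ 2)

lemma hasSum_log (x : ℝ) :
    HasSum (fun k : ℕ => Real.log (1 + x ^ 2 / (2 * (k : ℝ) + 1) ^ 2))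
      (Real.log (Real.cosh (π * x / 2))) := by
  rcases eq_or_ne x 0 with rfl | hx
  · simpa using hasSum_zero
  have hfac : ∀ k : ℕ, (0 : ℝ) < 1 + x ^ 2 / (2 * (k : ℝ) + 1) ^ 2 := fun k => by positivity
  have hsum : Summable (fun k : ℕ => Real.log (1 + x ^ 2 / (2 * (k : ℝ) + 1) ^ 2)) := by
    refine (summable_sq_inv x).of_nonneg_of_le
      (fun k => Real.log_nonneg (le_add_of_nonneg_right (by positivity))) fun k => ?_
    have := Real.log_le_sub_one_of_pos (hfac k)
    linarith
  have htend : Tendsto (fun n : ℕ => ∑ k ∈ Finset.range n, Real.log (1 + x ^ 2 / (2 * (k : ℝ) + 1) ^ 2))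
      atTop (𝓝 (Real.log (Real.cosh (π * x / 2)))) := by
    have hlog : Tendsto (fun n : ℕ => Real.log (∏ j ∈ Finset.range n, (1 + x ^ 2 / (2 * (j : ℝ) + 1) ^ 2)))
        atTop (𝓝 (Real.log (Real.cosh (π * x / 2)))) :=
      ((Real.continuousAt_log (Real.cosh_pos _).ne').tendsto).comp (cosh_prod x hx)
    refine hlog.congr fun n => ?_
    rw [Real.log_prod fun j _ => (hfac j).ne']
  have heq := tendsto_nhds_unique hsum.hasSum.tendsto_sum_nat htend
  exact heq ▸ hsum.hasSum

lemma hasSum_tanh (x : ℝ) (hx : 0 < x) :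
    HasSum (fun k : ℕ => 2 * x / ((2 * (k : ℝ) + 1) ^ 2 + x ^ 2))
      (π / 2 * Real.tanh (π * x / 2)) := by
  set g : ℕ → ℝ → ℝ := fun k y => Real.log (1 + y ^ 2 / (2 * (k : ℝ) + 1) ^ 2) with hg_def
  set g' : ℕ → ℝ → ℝ := fun k y => 2 * y / ((2 * (k : ℝ) + 1) ^ 2 + y ^ 2) with hg'_def
  have hderiv : ∀ (k : ℕ) (y : ℝ), HasDerivAt (g k) (g' k y) y := by
    intro k y
    have h1 : HasDerivAt (fun y : ℝ => 1 + y ^ 2 / (2 * (k : ℝ) + 1) ^ 2)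
        ((2 * y) / (2 * (k : ℝ) + 1) ^ 2) y := by
      have := ((hasDerivAt_pow 2 y).div_const ((2 * (k : ℝ) + 1) ^ 2)).const_add 1
      simpa using this
    have hpos : (0:ℝ) < 1 + y ^ 2 / (2 * (k : ℝ) + 1) ^ 2 := by positivity
    have h2 := (Real.hasDerivAt_log hpos.ne').comp y h1
    refine h2.congr_deriv ?_
    simp only [hg'_def]
    have hc : ((2:ℝ) * k + 1) ^ 2 ≠ 0 := by positivity
    field_simp
  have husum : Summable (fun k : ℕ => 2 * (x + 1) / (2 * (k : ℝ) + 1) ^ 2) := by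
    simpa [div_eq_mul_inv] using summable_odd_sq_inv.mul_left (2 * (x + 1))
  have key : HasDerivAt (fun z : ℝ => ∑' k, g k z) (∑' k, g' k x) x := by
    refine hasDerivAt_tsum_of_isPreconnected husum Metric.isOpen_ball
      (convex_ball (0:ℝ) (x+1)).isPreconnected (fun k y _ => hderiv k y)
      (fun k y hy => ?_) (y₀ := 0) ?_ ?_ ?_
    · have hy' : |y| < x + 1 := by simpa [Real.dist_eq] using hy
      have h1 : ‖g' k y‖ = 2 * |y| / ((2 * (k : ℝ) + 1) ^ 2 + y ^ 2) := by
        simp only [hg'_def, Real.norm_eq_abs, abs_div]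
        rw [abs_of_pos (by positivity : (0:ℝ) < (2 * (k : ℝ) + 1) ^ 2 + y ^ 2), abs_mul]
        norm_num
      rw [h1]
      apply div_le_div₀ (by positivity) (by linarith [abs_nonneg y]) (by positivity)
      nlinarith [sq_nonneg y]
    · simp [Real.dist_eq]; positivity
    · refine summable_zero.congr fun k => ?_
      simp [hg_def]
    · simp [Real.dist_eq]
      rw [abs_of_pos hx]; linarith
  have hF : (fun z : ℝ => ∑' k, g k z) = fun z => Real.log (Real.cosh (π * z / 2)) :=
    funext fun z => (hasSum_log z).tsum_eq
  rw [hF] at key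
  have h2 : HasDerivAt (fun z : ℝ => Real.log (Real.cosh (π * z / 2)))
      (π / 2 * Real.tanh (π * x / 2)) x := by
    have ha : HasDerivAt (fun z : ℝ => π * z / 2) (π / 2) x := by
      simpa using ((hasDerivAt_id x).const_mul π).div_const 2
    have hb := (Real.hasDerivAt_cosh (π * x / 2)).comp x ha
    have hlog := (Real.hasDerivAt_log (Real.cosh_pos (π * x / 2)).ne').comp x hb
    refine hlog.congr_deriv ?_
    rw [Real.tanh_eq_sinh_div_cosh]
    field_simp
  have hval : ∑' k, g' k x = π / 2 * Real.tanh (π * x / 2) := key.unique h2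
  have hsum' : Summable (fun k : ℕ => g' k x) := by
    refine (by simpa [div_eq_mul_inv] using summable_odd_sq_inv.mul_left (2 * x) :
      Summable (fun k : ℕ => 2 * x / (2 * (k : ℝ) + 1) ^ 2)).of_nonneg_of_le
      (fun k => by positivity) fun k => ?_
    apply div_le_div₀ (by positivity) le_rfl (by positivity)
    nlinarith [sq_nonneg x]
  exact hval ▸ hsum'.hasSum

lemma hasSum_odd_sq : HasSum (fun k : ℕ => 1 / (2 * (k : ℝ) + 1) ^ 2) (π ^ 2 / 8) := by
  obtain ⟨t, ht⟩ := summable_odd_sq_inv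
  have he : HasSum (fun k : ℕ => (fun n : ℕ => 1 / (n : ℝ) ^ 2) (2 * k)) (π ^ 2 / 24) := by
    have h := hasSum_zeta_two.mul_left (1/4 : ℝ)
    have h2 : (fun k : ℕ => (fun n : ℕ => 1 / (n : ℝ) ^ 2) (2 * k))
        = fun k : ℕ => (1/4 : ℝ) * (1 / (k : ℝ) ^ 2) := by
      funext k; push_cast; ring
    rw [h2]
    rw [show (π ^ 2 / 24 : ℝ) = 1 / 4 * (π ^ 2 / 6) by ring]; exact h
  have ho : HasSum (fun k : ℕ => (fun n : ℕ => 1 / (n : ℝ) ^ 2) (2 * k + 1)) t := by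
    have h2 : (fun k : ℕ => (fun n : ℕ => 1 / (n : ℝ) ^ 2) (2 * k + 1))
        = fun k : ℕ => 1 / (2 * (k : ℝ) + 1) ^ 2 := by
      funext k; push_cast; ring
    rw [h2]; exact ht
  have htot := HasSum.even_add_odd (f := fun n : ℕ => 1 / (n : ℝ) ^ 2) he ho
  have h6 : π ^ 2 / 24 + t = π ^ 2 / 6 := htot.unique hasSum_zeta_two
  have ht8 : t = π ^ 2 / 8 := by linarith
  exact ht8 ▸ ht

noncomputable def F : ℕ × ℕ → ℝ := fun p =>
  8 / π * (((2 * (p.2 : ℝ) + 1) ^ 2 - (2 * (p.1 : ℝ) + 1) ^ 2) /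
    ((2 * (p.1 : ℝ) + 1) ^ 2 * (2 * (p.2 : ℝ) + 1) ^ 2 *
      ((2 * (p.1 : ℝ) + 1) ^ 2 + (2 * (p.2 : ℝ) + 1) ^ 2)))

lemma F_summable : Summable F := by
  have hprod : Summable (fun p : ℕ × ℕ =>
      (1 / (2 * (p.1 : ℝ) + 1) ^ 2) * (1 / (2 * (p.2 : ℝ) + 1) ^ 2)) :=
    Summable.mul_of_nonneg (f := fun k : ℕ => 1 / (2 * (k : ℝ) + 1) ^ 2)
      (g := fun k : ℕ => 1 / (2 * (k : ℝ) + 1) ^ 2) summable_odd_sq_inv summable_odd_sq_inv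
      (fun k => by positivity) (fun k => by positivity)
  refine Summable.of_abs ?_
  refine (hprod.mul_left (8 / π)).of_nonneg_of_le (fun p => abs_nonneg _) fun p => ?_
  simp only [F]
  set N : ℝ := 2 * (p.1 : ℝ) + 1 with hN
  set M : ℝ := 2 * (p.2 : ℝ) + 1 with hM
  have hN0 : (0:ℝ) < N := by positivity
  have hM0 : (0:ℝ) < M := by positivity
  have hd : (0:ℝ) < N ^ 2 * M ^ 2 * (N ^ 2 + M ^ 2) := by positivity
  rw [abs_mul, abs_div, abs_div, abs_of_pos hd, abs_of_pos (by norm_num : (0:ℝ) < 8),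
    abs_of_pos Real.pi_pos]
  rw [show 8 / π * (1 / N ^ 2 * (1 / M ^ 2)) = 8 / π * ((N ^ 2 + M ^ 2) / (N ^ 2 * M ^ 2 * (N ^ 2 + M ^ 2))) by
    field_simp]
  have hnum : |M ^ 2 - N ^ 2| ≤ N ^ 2 + M ^ 2 := by
    rw [abs_le]; constructor <;> nlinarith
  gcongr

lemma F_hasSum_zero : HasSum F 0 := by
  obtain ⟨S, hS⟩ := F_summable
  have hswap : HasSum (F ∘ (Equiv.prodComm ℕ ℕ)) S := (Equiv.hasSum_iff _).mpr hS
  have hneg : F ∘ (Equiv.prodComm ℕ ℕ) = fun p => -F p := by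
    funext p
    simp only [Function.comp_apply, Equiv.prodComm_apply, Prod.snd_swap, Prod.fst_swap, F]
    ring
  rw [hneg] at hswap
  have h2 : HasSum F (-S) := by
    have := hswap.neg
    simpa using this
  have : S = -S := hS.unique h2
  have hS0 : S = 0 := by linarith
  exact hS0 ▸ hS

lemma F_fiber (k : ℕ) :
    HasSum (fun l : ℕ => F (k, l)) ((2 * (k : ℝ) + 1) * a (2 * k + 1)) := by
  set n : ℝ := 2 * (k : ℝ) + 1 with hn_def
  have hn : 0 < n := by positivity
  have h1 := (hasSum_tanh n hn).mul_left (8 / (π * n ^ 3))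
  have h2 := hasSum_odd_sq.mul_left (8 / (π * n ^ 2))
  have h := h1.sub h2
  have hfun : (fun l : ℕ => 8 / (π * n ^ 3) * (2 * n / ((2 * (l : ℝ) + 1) ^ 2 + n ^ 2))
      - 8 / (π * n ^ 2) * (1 / (2 * (l : ℝ) + 1) ^ 2)) = fun l => F (k, l) := by
    funext l
    have hm : (0:ℝ) < 2 * (l : ℝ) + 1 := by positivity
    simp only [F]
    rw [← hn_def]
    field_simp
    ring
  have hval : 8 / (π * n ^ 3) * (π / 2 * Real.tanh (π * n / 2))
      - 8 / (π * n ^ 2) * (π ^ 2 / 8) = (2 * (k : ℝ) + 1) * a (2 * k + 1) := by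
    simp only [a]
    push_cast
    rw [← hn_def]
    rw [show (n * π / 2) = π * n / 2 by ring]
    field_simp
    ring
  rw [hfun, hval] at h
  exact h

/-- The series `Σ_{n odd} n·a_n` (over odd positive integers) converges, with sum `0`;
equivalently `Σ_{n odd} (4·tanh(nπ/2)/n^3 − π/n^2) = 0`. -/
theorem sum_n_a_n_eq_zero :
    HasSum (fun k : ℕ => (2 * (k : ℝ) + 1) * a (2 * k + 1)) 0 :=
  F_hasSum_zero.prod_fiberwise F_fiber
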